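/- Let C ⊆ R^∞ be a Sym(∞)-invariant cone contained in the nonnegative orthant. Then the dual cone C* ⊆ R^ℕ is not Sym(∞)-equivariantly countably generated: for every countable set A ⊆ R^ℕ, the cone generated by the orbit Sym(∞)(A) is a proper subset of C*. -/

import Mathlib

/-- Action of a permutation of `ℕ` on real sequences: `(σ • u) i = u (σ⁻¹ i)`. -/
def permAct (σ : Equiv.Perm ℕ) (u : ℕ → ℝ) : ℕ → ℝ := fun i => u (σ.symm i)

/-- A permutation of `ℕ` is finitary if it moves only finitely many elements. -/
def IsFinitary (σ : Equiv.Perm ℕ) : Prop := {i | σ i ≠ i}.Finite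

/-- The `Sym(∞)`-orbit of a set of sequences. -/
def symOrbit (A : Set (ℕ → ℝ)) : Set (ℕ → ℝ) :=
  {v | ∃ σ : Equiv.Perm ℕ, IsFinitary σ ∧ ∃ u ∈ A, v = permAct σ u}

/-- Membership in the cone generated by `B`: finite nonnegative real combinations. -/
def inCone (B : Set (ℕ → ℝ)) (u : ℕ → ℝ) : Prop :=
  ∃ (k : ℕ) (c : Fin k → ℝ) (b : Fin k → ℕ → ℝ),
    (∀ i, 0 ≤ c i) ∧ (∀ i, b i ∈ B) ∧ u = ∑ i, c i • b i

/-- Finitary permutations form a countable set. -/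
lemma countable_finitary : {σ : Equiv.Perm ℕ | IsFinitary σ}.Countable := by
  have : Function.Injective
      (fun σ : {σ : Equiv.Perm ℕ // IsFinitary σ} =>
        (fun i => if (σ : Equiv.Perm ℕ) i = i then 0 else (σ : Equiv.Perm ℕ) i + 1 : ℕ → ℕ)) := by
    rintro ⟨σ, hσ⟩ ⟨τ, hτ⟩ h
    ext i
    have hi := congrFun h i
    simp only at hi
    by_cases h1 : σ i = i <;> by_cases h2 : τ i = i <;>
      simp [h1, h2] at hi ⊢ <;> omega
  have : Countable {σ : Equiv.Perm ℕ // IsFinitary σ} := by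
    refine Function.Injective.countable (f := fun σ : {σ : Equiv.Perm ℕ // IsFinitary σ} =>
      Finsupp.mk ((σ.2.toFinset).image (σ : Equiv.Perm ℕ) ∪ σ.2.toFinset)
        (fun i => if (σ : Equiv.Perm ℕ) i = i then 0 else (σ : Equiv.Perm ℕ) i + 1) ?_) ?_
    · intro σ
      simp only [Finset.mem_union, Finset.mem_image, Set.Finite.mem_toFinset, Set.mem_setOf_eq]
      constructor
      · rintro (⟨b, hb, rfl⟩ | h)
        · split_ifs with h
          · exact absurd ((σ : Equiv.Perm ℕ).injective h) ((Set.Finite.mem_toFinset (hs := _)).mp hb)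
          · simp
        · have h' : ¬ _ := (Set.Finite.mem_toFinset (hs := _)).mp h; simp [h']
      · intro ha
        split_ifs at ha with h
        · exact absurd rfl ha
        · right; exact (Set.Finite.mem_toFinset (hs := _)).mpr h
    · intro σ τ h
      exact this (congrArg Finsupp.toFun h)
  exact (Set.countable_coe_iff.mp this)

lemma symOrbit_countable {A : Set (ℕ → ℝ)} (hA : A.Countable) :
    (symOrbit A).Countable := by
  have : symOrbit A ⊆ (fun p : (Equiv.Perm ℕ) × (ℕ → ℝ) => permAct p.1 p.2) ''
      ({σ | IsFinitary σ} ×ˢ A) := by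
    rintro v ⟨σ, hσ, u, hu, rfl⟩
    exact ⟨(σ, u), ⟨hσ, hu⟩, rfl⟩
  exact Set.Countable.mono this ((countable_finitary.prod hA).image _)

open Cardinal in
/-- There is a nonnegative sequence outside the span of any countable set. -/
lemma exists_nonneg_not_mem_span {B : Set (ℕ → ℝ)} (hB : B.Countable) :
    ∃ u : ℕ → ℝ, (∀ i, 0 ≤ u i) ∧ u ∉ Submodule.span ℝ B := by
  by_contra h
  push_neg at h
  have htop : Submodule.span ℝ B = ⊤ := by
    rw [Submodule.eq_top_iff']
    intro u
    have h1 : (fun i => max (u i) 0) ∈ Submodule.span ℝ B := h _ (fun i => le_max_right _ _)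
    have h2 : (fun i => max (-u i) 0) ∈ Submodule.span ℝ B := h _ (fun i => le_max_right _ _)
    have : u = (fun i => max (u i) 0) - (fun i => max (-u i) 0) := by
      funext i
      simp only [Pi.sub_apply]
      rcases le_total (u i) 0 with h | h
      · rw [max_eq_right h, max_eq_left (by linarith)]; ring
      · rw [max_eq_left h, max_eq_right (by linarith)]; ring
    rw [this]
    exact Submodule.sub_mem _ h1 h2
  have hrank : Module.rank ℝ (ℕ → ℝ) ≤ ℵ₀ := by
    have := rank_span_le (R := ℝ) (M := ℕ → ℝ) B
    rw [htop] at this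
    calc Module.rank ℝ (ℕ → ℝ) = Module.rank ℝ (⊤ : Submodule ℝ (ℕ → ℝ)) := (rank_top ℝ _).symm
    _ ≤ #B := this
    _ ≤ ℵ₀ := hB.le_aleph0
  have : #ℝ ≤ ℵ₀ := le_trans (le_trans (le_max_right ℵ₀ #ℝ) (max_aleph0_card_le_rank_fun_nat (K := ℝ))) hrank
  rw [Cardinal.mk_real] at this
  exact absurd this (not_le.mpr Cardinal.aleph0_lt_continuum)

/-- The dual of a nonnegative `Sym(∞)`-invariant cone `C ⊆ R^∞` is not equivariantly
countably generated: any subcone of the dual generated by the `Sym(∞)`-orbit of a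
countable set `A` is a proper subset of the dual. -/
theorem dual_not_equivariantly_countably_generated
    (C : Set (ℕ → ℝ))
    (hfin : ∀ v ∈ C, {i | v i ≠ 0}.Finite)
    (hpos : ∀ v ∈ C, ∀ i, 0 ≤ v i)
    (hadd : ∀ v ∈ C, ∀ w ∈ C, v + w ∈ C)
    (hsmul : ∀ r : ℝ, 0 ≤ r → ∀ v ∈ C, r • v ∈ C)
    (hinv : ∀ σ : Equiv.Perm ℕ, IsFinitary σ → ∀ v ∈ C, permAct σ v ∈ C)
    (A : Set (ℕ → ℝ)) (hA : A.Countable)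
    (hsub : ∀ u, inCone (symOrbit A) u → ∀ v ∈ C, 0 ≤ ∑ᶠ i, u i * v i) :
    ∃ u : ℕ → ℝ, (∀ v ∈ C, 0 ≤ ∑ᶠ i, u i * v i) ∧ ¬ inCone (symOrbit A) u := by
  obtain ⟨u, hu0, huspan⟩ := exists_nonneg_not_mem_span (symOrbit_countable hA)
  refine ⟨u, fun v hv => finsum_nonneg fun i => mul_nonneg (hu0 i) (hpos v hv i), ?_⟩
  rintro ⟨k, c, b, hc, hb, rfl⟩
  exact huspan (Submodule.sum_mem _ fun i _ =>
    Submodule.smul_mem _ _ (Submodule.subset_span (hb i)))
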